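/- Suppose F₁, F₂, G₁, G₂, h₁, h₂, k₁, k₂ : D → ℂ satisfy F₁h₁ − G₁k̂₁ + F₂h₂ − G₂k̂₂ = 1 and F₁k₁ + G₁ĥ₁ + F₂k₂ + G₂ĥ₂ = 0 pointwise. Then F₁ = (F̂₁F₁+Ĝ₁G₁)ĥ₁ + (F̂₂F₁+Ĝ₁G₂)ĥ₂ + (Ĝ₁F₂−Ĝ₂F₁)k₂ pointwise on D. -/
import Mathlib


open Metric

/-- The hat involution: `hat P z = conj (P (conj z))`. -/
noncomputable def hat (P : ℂ → ℂ) : ℂ → ℂ := fun z => starRingEnd ℂ (P (starRingEnd ℂ z))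

theorem F1_identity_two_generators (F₁ F₂ G₁ G₂ h₁ h₂ k₁ k₂ : ℂ → ℂ)
    (heq1 : ∀ z ∈ ball (0 : ℂ) 1,
      F₁ z * h₁ z - G₁ z * hat k₁ z + F₂ z * h₂ z - G₂ z * hat k₂ z = 1)
    (heq2 : ∀ z ∈ ball (0 : ℂ) 1,
      F₁ z * k₁ z + G₁ z * hat h₁ z + F₂ z * k₂ z + G₂ z * hat h₂ z = 0) :
    ∀ z ∈ ball (0 : ℂ) 1,
      F₁ z = (hat F₁ z * F₁ z + hat G₁ z * G₁ z) * hat h₁ z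
        + (hat F₂ z * F₁ z + hat G₁ z * G₂ z) * hat h₂ z
        + (hat G₁ z * F₂ z - hat G₂ z * F₁ z) * k₂ z := by
  intro z hz
  have hz' : starRingEnd ℂ z ∈ ball (0 : ℂ) 1 := by
    simp only [mem_ball, dist_zero_right] at hz ⊢
    simpa using hz
  have e1 := congrArg (starRingEnd ℂ) (heq1 _ hz')
  have e2 := congrArg (starRingEnd ℂ) (heq2 _ hz')
  simp only [map_add, map_sub, map_mul, map_one, map_zero, hat,
    Complex.conj_conj] at e1 e2
  have e3 := heq2 z hz
  simp only [hat] at e3 ⊢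
  linear_combination -F₁ z * e1 - starRingEnd ℂ (G₁ (starRingEnd ℂ z)) * e3
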